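/- In the kinked SEM π = c̃ + β̃(max(r*,0) - rⁿ) + ε̃₁, r* = rⁿ + γπ + ε₂ with β̃γ < 1, the unique solution is π = μ₁ + u₁ - β̃·D·(μ₂ + u₂) and r = max(μ₂+u₂, 0), where D = 1{r=0}, u₁ = (ε̃₁+β̃ε₂)/(1-γβ̃), u₂ = (γε̃₁+ε₂)/(1-γβ̃), μ₁ = c̃/(1-γβ̃), μ₂ = γc̃/(1-γβ̃) + rⁿ. -/

import Mathlib

/-- Unique solution of the kinked SEM π = c̃ + β̃(max(r*,0) - rⁿ) + ε̃₁,
r* = rⁿ + γπ + ε₂ under the coherency condition β̃γ < 1. -/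
theorem stmt1 (ctil βtil γ rn ε1til ε2 : ℝ) (h : βtil * γ < 1) :
    let u1 := (ε1til + βtil * ε2) / (1 - γ * βtil)
    let u2 := (γ * ε1til + ε2) / (1 - γ * βtil)
    let μ1 := ctil / (1 - γ * βtil)
    let μ2 := γ * ctil / (1 - γ * βtil) + rn
    let D : ℝ := if μ2 + u2 ≤ 0 then 1 else 0
    let π0 := μ1 + u1 - βtil * D * (μ2 + u2)
    (∀ p : ℝ × ℝ,
      (p.1 = ctil + βtil * (max p.2 0 - rn) + ε1til ∧ p.2 = rn + γ * p.1 + ε2) ↔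
      (p.1 = π0 ∧ p.2 = rn + γ * π0 + ε2)) ∧
    max (rn + γ * π0 + ε2) 0 = max (μ2 + u2) 0 := by
  intro u1 u2 μ1 μ2 D π0
  have hk : 0 < 1 - γ * βtil := by nlinarith
  have hk' : (1 - γ * βtil) ≠ 0 := ne_of_gt hk
  -- key identity: rn + γ*(μ1+u1) + ε2 = μ2 + u2
  have key : rn + γ * (μ1 + u1) + ε2 = μ2 + u2 := by
    simp only [u1, u2, μ1, μ2]
    field_simp
    ring
  -- value of π0 in the binding case
  have hbind : μ1 + u1 - βtil * (μ2 + u2) = ctil + ε1til - βtil * rn := by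
    simp only [u1, u2, μ1, μ2]
    field_simp
    ring
  by_cases hs : μ2 + u2 ≤ 0
  · -- binding case: D = 1
    have hπ0 : π0 = ctil + ε1til - βtil * rn := by
      simp only [π0, D, if_pos hs]
      linarith [hbind]
    have h2 : rn + γ * π0 + ε2 = (1 - γ * βtil) * (μ2 + u2) := by
      simp only [π0, D, if_pos hs]
      linear_combination key
    have h2le : rn + γ * π0 + ε2 ≤ 0 := by
      rw [h2]; exact mul_nonpos_of_nonneg_of_nonpos hk.le hs
    constructor
    · intro p
      constructor
      · rintro ⟨hp1, hp2⟩
        by_cases hp : p.2 ≤ 0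
        · have hm : max p.2 0 = 0 := max_eq_right hp
          rw [hm] at hp1
          have e1 : p.1 = π0 := by rw [hπ0]; linarith
          exact ⟨e1, by rw [hp2, e1]⟩
        · -- p.2 > 0: then p.1 = μ1 + u1 and p.2 = μ2 + u2 > 0, contradiction
          push_neg at hp
          have hm : max p.2 0 = p.2 := max_eq_left hp.le
          rw [hm, hp2] at hp1
          have e1 : p.1 = μ1 + u1 := by
            have : (1 - γ * βtil) * p.1 = ctil + ε1til + βtil * ε2 := by
              linear_combination hp1
            simp only [u1, μ1]
            rw [← add_div, eq_div_iff hk']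
            linear_combination this
          have : p.2 = μ2 + u2 := by rw [hp2, e1]; exact key
          linarith [hp, this ▸ hs]
      · rintro ⟨hp1, hp2⟩
        refine ⟨?_, by rw [hp2, hp1]⟩
        have hm : max p.2 0 = 0 := by rw [hp2]; exact max_eq_right h2le
        rw [hm, hp1, hπ0]; ring
    · rw [max_eq_right h2le, max_eq_right hs]
  · -- slack case: D = 0
    push_neg at hs
    have hπ0 : π0 = μ1 + u1 := by
      simp only [π0, D, if_neg (not_le.mpr hs)]
      ring
    have h2 : rn + γ * π0 + ε2 = μ2 + u2 := by rw [hπ0]; exact key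
    have hfix : μ1 + u1 = ctil + βtil * ((μ2 + u2) - rn) + ε1til := by
      simp only [u1, u2, μ1, μ2]
      field_simp
      ring
    constructor
    · intro p
      constructor
      · rintro ⟨hp1, hp2⟩
        by_cases hp : p.2 ≤ 0
        · -- binding would force μ2+u2 ≤ 0, contradiction
          have hm : max p.2 0 = 0 := max_eq_right hp
          rw [hm] at hp1
          have e1 : p.1 = ctil + ε1til - βtil * rn := by linarith
          have : p.2 = (1 - γ * βtil) * (μ2 + u2) := by
            rw [hp2, e1]
            linear_combination key - γ * hbind
          nlinarith
        · push_neg at hp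
          have hm : max p.2 0 = p.2 := max_eq_left hp.le
          rw [hm, hp2] at hp1
          have e1 : p.1 = μ1 + u1 := by
            have : (1 - γ * βtil) * p.1 = ctil + ε1til + βtil * ε2 := by
              linear_combination hp1
            simp only [u1, μ1]
            rw [← add_div, eq_div_iff hk']
            linear_combination this
          exact ⟨e1.trans hπ0.symm, by rw [hp2, e1, ← hπ0]⟩
      · rintro ⟨hp1, hp2⟩
        refine ⟨?_, by rw [hp2, hp1]⟩
        have hm : max p.2 0 = μ2 + u2 := by
          rw [hp2, h2]; exact max_eq_left hs.le
        rw [hm, hp1, hπ0, hfix]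
    · rw [h2]
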